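/- Let f be a multivariate polynomial over ℚ in variables indexed by a type σ, with total degree at most d, and let k ≤ d. Then there exist rational numbers c_0, ..., c_d such that for every point x : σ → ℚ, the evaluation at x of the homogeneous component of degree k of f equals ∑_{i=0}^{d} c_i * f(2^i · x), where f(2^i · x) denotes the evaluation of f at the point (fun s => 2^i * x s). -/

import Mathlib

lemma scale_eval_aux {σ : Type*} {φ : MvPolynomial σ ℚ} {n : ℕ} (hφ : φ.IsHomogeneous n)
    (t : ℚ) (x : σ → ℚ) :
    MvPolynomial.eval (fun s => t * x s) φ = t ^ n * MvPolynomial.eval x φ := by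
  rw [MvPolynomial.eval_eq, MvPolynomial.eval_eq, Finset.mul_sum]
  refine Finset.sum_congr rfl fun m hm => ?_
  have hdeg : ∑ i ∈ m.support, m i = n := by
    have h := hφ (MvPolynomial.mem_support_iff.mp hm)
    rw [← h]
    simp [Finsupp.weight_apply, Finsupp.sum]
  simp_rw [mul_pow]
  rw [Finset.prod_mul_distrib, Finset.prod_pow_eq_pow_sum, hdeg]
  ring

/-- Lemma compo-homo: the degree-`k` homogeneous component of `f` is a fixed rational
linear combination of evaluations of `f` at points scaled by powers of `2`. -/
theorem stmt_5 {σ : Type*} (f : MvPolynomial σ ℚ) (d k : ℕ) (hf : f.totalDegree ≤ d)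
    (hk : k ≤ d) :
    ∃ c : ℕ → ℚ, ∀ x : σ → ℚ,
      MvPolynomial.eval x (MvPolynomial.homogeneousComponent k f)
        = ∑ i ∈ Finset.range (d + 1),
            c i * MvPolynomial.eval (fun s => (2 : ℚ) ^ i * x s) f := by
  set V : Matrix (Fin (d + 1)) (Fin (d + 1)) ℚ :=
    Matrix.vandermonde (fun i : Fin (d + 1) => (2 : ℚ) ^ (i : ℕ)) with hV
  have hdet : IsUnit V.det := by
    rw [Matrix.det_vandermonde]
    refine (Finset.prod_ne_zero_iff.mpr fun i _ => Finset.prod_ne_zero_iff.mpr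
      fun j hj => sub_ne_zero.mpr ?_).isUnit
    have hij : (i : ℕ) < (j : ℕ) := Fin.lt_iff_val_lt_val.mp (Finset.mem_Ioi.mp hj)
    exact (pow_lt_pow_right₀ (by norm_num) hij).ne'
  have hkd : k < d + 1 := Nat.lt_succ_of_le hk
  refine ⟨fun i => if h : i < d + 1 then (V⁻¹) ⟨k, hkd⟩ ⟨i, h⟩ else 0, fun x => ?_⟩
  -- decomposition of f into homogeneous components up to degree d
  have hdecomp : f = ∑ j ∈ Finset.range (d + 1), MvPolynomial.homogeneousComponent j f := by
    conv_lhs => rw [← MvPolynomial.sum_homogeneousComponent f]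
    apply Finset.sum_subset (Finset.range_subset_range.mpr (by omega))
    intro j _ hj
    simp only [Finset.mem_range, not_lt] at hj
    exact MvPolynomial.homogeneousComponent_eq_zero j f (by omega)
  set h : Fin (d + 1) → ℚ := fun j => MvPolynomial.eval x (MvPolynomial.homogeneousComponent j f)
    with hh
  have heval : ∀ i : Fin (d + 1),
      MvPolynomial.eval (fun s => (2 : ℚ) ^ (i : ℕ) * x s) f = (V.mulVec h) i := by
    intro i
    conv_lhs => rw [hdecomp]
    rw [map_sum, Matrix.mulVec, dotProduct]
    rw [Finset.sum_range fun j => MvPolynomial.eval (fun s => (2:ℚ)^(i:ℕ) * x s)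
      (MvPolynomial.homogeneousComponent j f)]
    refine Finset.sum_congr rfl fun j _ => ?_
    rw [scale_eval_aux (MvPolynomial.homogeneousComponent_isHomogeneous j f)]
    simp [hV, Matrix.vandermonde, hh]
  calc MvPolynomial.eval x (MvPolynomial.homogeneousComponent k f)
      = h ⟨k, hkd⟩ := rfl
    _ = (V⁻¹.mulVec (V.mulVec h)) ⟨k, hkd⟩ := by
        rw [Matrix.mulVec_mulVec, Matrix.nonsing_inv_mul V hdet, Matrix.one_mulVec]
    _ = ∑ i ∈ Finset.range (d + 1), (if hi : i < d + 1 then (V⁻¹) ⟨k, hkd⟩ ⟨i, hi⟩ else 0)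
          * MvPolynomial.eval (fun s => (2 : ℚ) ^ i * x s) f := by
        rw [Matrix.mulVec, dotProduct, Finset.sum_range]
        refine Finset.sum_congr rfl fun i _ => ?_
        rw [heval i]
        simp [i.isLt, i.is_le]
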